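/- Let N and p be positive integers with 2p ≤ N. Define α : ℤ → ℚ by α(i) = k/(2N) if the residue k = i mod N (with 0 ≤ k < N) satisfies 0 ≤ k < p, α(i) = p/(2N) if p ≤ k ≤ N - p, and α(i) = 1/2 - k/(2N) if N - p < k < N. Then for all integers i, j, one has α(i) + α(j) - α(i+j) ≥ 0. -/

import Mathlib

/-- Scaling inequality: with `α` defined on `ℤ` via the residue `k = i mod N`
(`0 ≤ k < N`) by `α i = k/(2N)` if `k < p`, `α i = p/(2N)` if `p ≤ k ≤ N - p`,
and `α i = 1/2 - k/(2N)` if `N - p < k < N`, one has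
`α i + α j - α (i+j) ≥ 0` for all integers `i, j`. -/
theorem scaling_inequality (N p : ℕ) (hp : 1 ≤ p) (hpN : 2 * p ≤ N)
    (α : ℤ → ℚ)
    (hα : ∀ i : ℤ, α i =
      if (i % (N : ℤ)) < (p : ℤ) then ((i % (N : ℤ) : ℤ) : ℚ) / (2 * N)
      else if (i % (N : ℤ)) ≤ (N : ℤ) - (p : ℤ) then (p : ℚ) / (2 * N)
      else 1 / 2 - ((i % (N : ℤ) : ℤ) : ℚ) / (2 * N)) :
    ∀ i j : ℤ, 0 ≤ α i + α j - α (i + j) := by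
  have hN1 : 1 ≤ N := le_trans (by omega) hpN
  have hN0 : (0:ℤ) < (N:ℤ) := by exact_mod_cast hN1
  have hNQ : (N:ℚ) ≠ 0 := by positivity
  have hpq : (0:ℤ) < p := by exact_mod_cast hp
  have hpNq : 2 * (p:ℤ) ≤ N := by exact_mod_cast hpN
  have key : ∀ x : ℤ, α x =
      ((min (x % N) (min (p:ℤ) ((N:ℤ) - x % N)) : ℤ) : ℚ) / (2 * N) := by
    intro x
    have h0 : 0 ≤ x % (N:ℤ) := Int.emod_nonneg x (by omega)
    have h1 : x % (N:ℤ) < N := Int.emod_lt_of_pos x hN0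
    rw [hα x]
    split_ifs with ha hb
    · congr 1
      have : min (x % (N:ℤ)) (min (p:ℤ) ((N:ℤ) - x % N)) = x % N := by omega
      rw [this]
    · have : min (x % (N:ℤ)) (min (p:ℤ) ((N:ℤ) - x % N)) = p := by omega
      rw [this]; norm_num
    · have : min (x % (N:ℤ)) (min (p:ℤ) ((N:ℤ) - x % N)) = (N:ℤ) - x % N := by omega
      rw [this]
      push_cast
      field_simp
  intro i j
  rw [key i, key j, key (i + j)]
  rw [← add_div, ← sub_div]
  apply div_nonneg _ (by positivity)
  have hc : (i + j) % (N:ℤ) = i % N + j % N ∨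
      (i + j) % (N:ℤ) = i % N + j % N - N := by
    have h1 : (i + j) % (N:ℤ) = (i % N + j % N) % N := by rw [Int.add_emod]
    have ha0 : 0 ≤ i % (N:ℤ) := Int.emod_nonneg i (by omega)
    have ha1 : i % (N:ℤ) < N := Int.emod_lt_of_pos i hN0
    have hb0 : 0 ≤ j % (N:ℤ) := Int.emod_nonneg j (by omega)
    have hb1 : j % (N:ℤ) < N := Int.emod_lt_of_pos j hN0
    rcases lt_or_ge (i % (N:ℤ) + j % N) N with h | h
    · left; rw [h1, Int.emod_eq_of_lt (by omega) h]
    · right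
      rw [h1, ← Int.sub_emod_right (i % (N:ℤ) + j % N) N,
        Int.emod_eq_of_lt (by omega) (by omega)]
  have ha0 : 0 ≤ i % (N:ℤ) := Int.emod_nonneg i (by omega)
  have ha1 : i % (N:ℤ) < N := Int.emod_lt_of_pos i hN0
  have hb0 : 0 ≤ j % (N:ℤ) := Int.emod_nonneg j (by omega)
  have hb1 : j % (N:ℤ) < N := Int.emod_lt_of_pos j hN0
  have : (0:ℤ) ≤ min (i % N) (min (p:ℤ) ((N:ℤ) - i % N)) +
      min (j % N) (min (p:ℤ) ((N:ℤ) - j % N)) -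
      min ((i + j) % N) (min (p:ℤ) ((N:ℤ) - (i + j) % N)) := by
    rcases hc with hc | hc <;> rw [hc] <;> omega
  exact_mod_cast this
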